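/- Let n be a nonnegative integer and λ ∈ ℝ with λ > (1/2)·f_1(n). Then λ·f_j(n) > f_{j+1}(n) for all integers j with 1 ≤ j ≤ ν(n)−1, where ν(n) = ⌊n/2⌋. -/
import Mathlib


/-- The coefficient `f_j(n) = (n−2j+1)_{4j} / (4^j (2j)!)` from the paper. -/
noncomputable def fcoef (j n : ℕ) : ℝ :=
  (ascPochhammer ℝ (4 * j)).eval ((n : ℝ) - 2 * (j : ℝ) + 1) /
    (4 ^ j * (Nat.factorial (2 * j) : ℝ))

lemma poch_succ_left_eval (m : ℕ) (y : ℝ) :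
    (ascPochhammer ℝ (m + 1)).eval y = y * (ascPochhammer ℝ m).eval (y + 1) := by
  rw [ascPochhammer_succ_left, Polynomial.eval_mul, Polynomial.eval_X, Polynomial.eval_comp]
  simp

lemma poch_split (j : ℕ) (y : ℝ) :
    (ascPochhammer ℝ (4 * (j + 1))).eval y =
      y * (y + 1) * (ascPochhammer ℝ (4 * j)).eval (y + 2) *
        (y + 2 + 4 * j) * (y + 2 + 4 * j + 1) := by
  have h : 4 * (j + 1) = (4 * j + 1 + 1) + 1 + 1 := by ring
  rw [h, ascPochhammer_succ_eval, ascPochhammer_succ_eval, poch_succ_left_eval,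
    poch_succ_left_eval]
  push_cast
  ring

lemma fcoef_rec (n j : ℕ) : fcoef (j + 1) n =
    fcoef j n * (((n:ℝ) - 2 * (j:ℝ) - 1) * ((n:ℝ) - 2 * (j:ℝ)) * ((n:ℝ) + 2 * (j:ℝ) + 1)
      * ((n:ℝ) + 2 * (j:ℝ) + 2) / (4 * (2 * (j:ℝ) + 1) * (2 * (j:ℝ) + 2))) := by
  unfold fcoef
  rw [poch_split]
  have hfac : (Nat.factorial (2 * (j + 1)) : ℝ)
      = (2 * (j:ℝ) + 2) * (2 * (j:ℝ) + 1) * (Nat.factorial (2 * j) : ℝ) := by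
    have h : 2 * (j + 1) = (2 * j + 1) + 1 := by ring
    rw [h, Nat.factorial_succ, Nat.factorial_succ]
    push_cast; ring
  rw [hfac]
  have h1 : (Nat.factorial (2 * j) : ℝ) ≠ 0 := by positivity
  have h2 : (4:ℝ) ^ j ≠ 0 := by positivity
  have h3 : (2*(j:ℝ)+1) ≠ 0 := by positivity
  have h4 : (2*(j:ℝ)+2) ≠ 0 := by positivity
  push_cast
  field_simp
  ring

lemma fcoef_one (n : ℕ) : fcoef 1 n = ((n:ℝ) - 1) * (n:ℝ) * ((n:ℝ) + 1) * ((n:ℝ) + 2) / 8 := by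
  unfold fcoef
  norm_num [show 4 * 1 = 0+1+1+1+1 from rfl, ascPochhammer_succ_eval]
  ring

lemma ratio_bound (N J : ℝ) (hJ1 : 1 ≤ J) (hN : 2 * J + 2 ≤ N) :
    (N - 2 * J - 1) * (N - 2 * J) * (N + 2 * J + 1) * (N + 2 * J + 2)
      / (4 * (2 * J + 1) * (2 * J + 2)) ≤ (1 / 2) * ((N - 1) * N * (N + 1) * (N + 2) / 8) := by
  have hden : (0:ℝ) < 4 * (2 * J + 1) * (2 * J + 2) := by nlinarith
  rw [div_le_iff₀ hden]
  have hA : (N - 2*J - 1) * (N + 2*J + 2) ≤ (N - 1) * (N + 2) := by nlinarith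
  have hB : (N - 2*J) * (N + 2*J + 1) ≤ N * (N + 1) := by nlinarith
  have hB0 : (0:ℝ) ≤ (N - 2*J) * (N + 2*J + 1) := by nlinarith
  have hR0 : (0:ℝ) ≤ (N - 1) * (N + 2) := by nlinarith
  have key : ((N - 2*J - 1) * (N + 2*J + 2)) * ((N - 2*J) * (N + 2*J + 1))
      ≤ ((N - 1) * (N + 2)) * (N * (N + 1)) := mul_le_mul hA hB hB0 hR0
  have hRR : (0:ℝ) ≤ ((N - 1) * (N + 2)) * (N * (N + 1)) := mul_nonneg hR0 (by nlinarith)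
  have hJJ : (1:ℝ) ≤ (2*J + 1) * (2*J + 2) / 4 := by nlinarith
  calc (N - 2*J - 1) * (N - 2*J) * (N + 2*J + 1) * (N + 2*J + 2)
      = ((N - 2*J - 1) * (N + 2*J + 2)) * ((N - 2*J) * (N + 2*J + 1)) := by ring
    _ ≤ ((N - 1) * (N + 2)) * (N * (N + 1)) := key
    _ ≤ ((N - 1) * (N + 2)) * (N * (N + 1)) * ((2*J + 1) * (2*J + 2) / 4) :=
        le_mul_of_one_le_right hRR hJJ
    _ = 1 / 2 * ((N - 1) * N * (N + 1) * (N + 2) / 8) * (4 * (2 * J + 1) * (2 * J + 2)) := by ring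

/-- If `λ > (1/2) f_1(n)` then `λ f_j(n) > f_{j+1}(n)` for all `1 ≤ j ≤ ν(n)−1`,
where `ν(n) = ⌊n/2⌋` (the condition `j ≤ ν(n)−1` is expressed as `j + 1 ≤ n/2`). -/
theorem fcoef_ratio (n : ℕ) (lam : ℝ) (hlam : lam > (1 / 2) * fcoef 1 n)
    (j : ℕ) (hj1 : 1 ≤ j) (hj2 : j + 1 ≤ n / 2) :
    lam * fcoef j n > fcoef (j + 1) n := by
  have hn : 2 * (j + 1) ≤ n := by omega
  have hJ1 : (1 : ℝ) ≤ (j:ℝ) := by exact_mod_cast hj1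
  have hN : 2 * (j:ℝ) + 2 ≤ (n:ℝ) := by
    have h : ((2 * (j + 1) : ℕ) : ℝ) ≤ (n:ℝ) := by exact_mod_cast hn
    push_cast at h; linarith
  have hpos : 0 < fcoef j n := by
    apply div_pos
    · apply ascPochhammer_pos
      nlinarith
    · positivity
  have hratio := ratio_bound (n:ℝ) (j:ℝ) hJ1 hN
  rw [← fcoef_one n] at hratio
  have hlam' : ((n:ℝ) - 2 * (j:ℝ) - 1) * ((n:ℝ) - 2 * (j:ℝ)) * ((n:ℝ) + 2 * (j:ℝ) + 1)
      * ((n:ℝ) + 2 * (j:ℝ) + 2) / (4 * (2 * (j:ℝ) + 1) * (2 * (j:ℝ) + 2)) < lam :=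
    lt_of_le_of_lt hratio hlam
  rw [fcoef_rec n j]
  calc fcoef j n * _ < fcoef j n * lam := (mul_lt_mul_iff_right₀ hpos).mpr hlam'
    _ = lam * fcoef j n := mul_comm _ _
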